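/- Let n ≥ 7 and let S be a nonlocal metric basis of the wheel W_{1,n} (so S ⊆ V(C_n), |S| ≥ 2). Then at most one gap of S contains 3 or more vertices. -/

import Mathlib

/-- `X` is a nonlocal resolving set of `G`: every pair of distinct non-adjacent
vertices is resolved by some vertex of `X`. -/
def IsNLResolving {V : Type*} (G : SimpleGraph V) (X : Finset V) : Prop :=
  ∀ u v : V, u ≠ v → ¬ G.Adj u v → ∃ x ∈ X, G.dist u x ≠ G.dist v x

/-- The nonlocal metric dimension of `G`. -/
noncomputable def nldim {V : Type*} [Fintype V] (G : SimpleGraph V) : ℕ :=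
  sInf {n | ∃ X : Finset V, X.card = n ∧ IsNLResolving G X}

/-- `X` is a resolving set of `G`. -/
def IsResolving {V : Type*} (G : SimpleGraph V) (X : Finset V) : Prop :=
  ∀ u v : V, u ≠ v → ∃ x ∈ X, G.dist u x ≠ G.dist v x

/-- The metric dimension of `G`. -/
noncomputable def metricDim {V : Type*} [Fintype V] (G : SimpleGraph V) : ℕ :=
  sInf {n | ∃ X : Finset V, X.card = n ∧ IsResolving G X}

/-- The corona product `G ⊙ H`: one copy of `G` and, for each vertex `g` of `G`,
a copy of `H` whose vertices are all joined to `g`. -/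
def corona {V W : Type*} (G : SimpleGraph V) (H : SimpleGraph W) :
    SimpleGraph (V ⊕ V × W) :=
  SimpleGraph.fromRel (fun a b =>
    match a, b with
    | Sum.inl g, Sum.inl g' => G.Adj g g'
    | Sum.inl g, Sum.inr p => g = p.1
    | Sum.inr p, Sum.inr q => p.1 = q.1 ∧ H.Adj p.2 q.2
    | _, _ => False)

/-- The join `H + K₁`: a new vertex (`none`) adjacent to every vertex of `H`. -/
def joinK1 {W : Type*} (H : SimpleGraph W) : SimpleGraph (Option W) :=
  SimpleGraph.fromRel (fun a b =>
    a = none ∨ ∃ w w', a = some w ∧ b = some w' ∧ H.Adj w w')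

/-- The wheel `W_{1,n} = K₁ + Cₙ`, with central vertex `none`. -/
def wheel (n : ℕ) : SimpleGraph (Option (Fin n)) :=
  joinK1 (SimpleGraph.cycleGraph n)

/-- `A_{i,j}` is a gap of `X ⊆ V(Cₙ)`: `i, j ∈ X`, `i ≠ j`, and no vertex of
`{i+1, …, j-1}` (cyclically) lies in `X`. -/
def IsGap {n : ℕ} (X : Finset (Fin n)) (i j : Fin n) : Prop :=
  i ∈ X ∧ j ∈ X ∧ i ≠ j ∧
    ∀ k : Fin n, 0 < (k - i).val → (k - i).val < (j - i).val → k ∉ X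

/-- The number of vertices in the gap `A_{i,j} = {i+1, …, j-1}`. -/
def gapSize {n : ℕ} (i j : Fin n) : ℕ := (j - i).val - 1

/-- The edge cover number `β'(G)`: the least number of edges of `G` covering all
vertices. -/
noncomputable def edgeCoverNum {V : Type*} [Fintype V] (G : SimpleGraph V) : ℕ :=
  sInf {n | ∃ F : Finset (Sym2 V), F.card = n ∧ ↑F ⊆ G.edgeSet ∧ ∀ v : V, ∃ e ∈ F, v ∈ e}

open Fin.CommRing

lemma wheel_adj_some {n : ℕ} {a b : Fin n} :
    (wheel n).Adj (some a) (some b) ↔ (SimpleGraph.cycleGraph n).Adj a b := by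
  simp only [wheel, joinK1, SimpleGraph.fromRel_adj, Option.some.injEq, ne_eq,
    reduceCtorEq, false_or, exists_and_left, exists_eq_left']
  constructor
  · rintro ⟨hne, h | h⟩
    · exact h
    · exact h.symm
  · intro h
    exact ⟨fun e => h.ne (by exact_mod_cast e), Or.inl h⟩

lemma wheel_adj_none {n : ℕ} {a : Fin n} : (wheel n).Adj (some a) none := by
  simp [wheel, joinK1, SimpleGraph.fromRel_adj]

lemma wheel_dist_two {n : ℕ} {a b : Fin n} (hne : a ≠ b)
    (hadj : ¬ (SimpleGraph.cycleGraph n).Adj a b) :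
    (wheel n).dist (some a) (some b) = 2 := by
  have w : (wheel n).Walk (some a) (some b) :=
    SimpleGraph.Walk.cons wheel_adj_none (SimpleGraph.Walk.cons wheel_adj_none.symm SimpleGraph.Walk.nil)
  have h2 : (wheel n).dist (some a) (some b) ≤ 2 := by
    have := SimpleGraph.dist_le (SimpleGraph.Walk.cons (wheel_adj_none (a := a))
      (SimpleGraph.Walk.cons (wheel_adj_none (a := b)).symm SimpleGraph.Walk.nil))
    simpa using this
  have h0 : (wheel n).dist (some a) (some b) ≠ 0 := by
    intro h
    rw [SimpleGraph.dist_eq_zero_iff_eq_or_not_reachable] at h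
    rcases h with h | h
    · exact hne (by simpa using h)
    · exact h ⟨w⟩
  have h1 : (wheel n).dist (some a) (some b) ≠ 1 := by
    intro h
    rw [SimpleGraph.dist_eq_one_iff_adj, wheel_adj_some] at h
    exact hadj h
  omega

lemma sub_val_eq_one {n : ℕ} [NeZero n] (hn : 7 ≤ n) {a b : Fin n} (h : (a - b).val = 1) :
    a = b + ((1 : ℕ) : Fin n) := by
  have : a - b = ((1 : ℕ) : Fin n) := by
    apply Fin.ext
    rw [h, Fin.val_cast_of_lt (by omega)]
  linear_combination this

lemma gap_mem {n : ℕ} [NeZero n] (hn : 7 ≤ n) {S : Finset (Fin n)} {i j : Fin n}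
    (hg : IsGap S i j) (c : ℕ) (hc0 : 0 < c) (hc : c < (j - i).val) :
    i + ((c : ℕ) : Fin n) ∉ S := by
  apply hg.2.2.2
  · rw [add_sub_cancel_left, Fin.val_cast_of_lt (lt_trans hc (j - i).isLt)]
    omega
  · rw [add_sub_cancel_left, Fin.val_cast_of_lt (lt_trans hc (j - i).isLt)]
    exact hc

/-- If `S ⊆ V(Cₙ)` is a nonlocal metric basis of the wheel
`W_{1,n}`, `n ≥ 7`, `|S| ≥ 2`, then at most one gap of `S` contains `3` or
more vertices. -/
theorem stmt_10 (n : ℕ) (hn : 7 ≤ n) (S : Finset (Fin n)) (hS : 2 ≤ S.card)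
    (hres : IsNLResolving (wheel n) (S.image some))
    (hmin : (S.image some).card = nldim (wheel n)) :
    ∀ i j i' j' : Fin n, IsGap S i j → IsGap S i' j' →
      3 ≤ gapSize i j → 3 ≤ gapSize i' j' → i = i' ∧ j = j' := by
  intro i j i' j' hg hg' h3 h3'
  haveI : NeZero n := ⟨by omega⟩
  have h4 : 4 ≤ (j - i).val := by
    have : (j - i).val ≠ 0 := fun h => hg.2.2.1 (by
      have : j - i = 0 := Fin.ext (by simpa using h)
      linear_combination -this)
    simp only [gapSize] at h3; omega
  have h4' : 4 ≤ (j' - i').val := by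
    have : (j' - i').val ≠ 0 := fun h => hg'.2.2.1 (by
      have : j' - i' = 0 := Fin.ext (by simpa using h)
      linear_combination -this)
    simp only [gapSize] at h3'; omega
  -- vertices near i, i' are not in S
  have k1 : i + ((1 : ℕ) : Fin n) ∉ S := gap_mem hn hg 1 (by omega) (by omega)
  have k2 : i + ((2 : ℕ) : Fin n) ∉ S := gap_mem hn hg 2 (by omega) (by omega)
  have k3 : i + ((3 : ℕ) : Fin n) ∉ S := gap_mem hn hg 3 (by omega) (by omega)
  have k1' : i' + ((1 : ℕ) : Fin n) ∉ S := gap_mem hn hg' 1 (by omega) (by omega)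
  have k2' : i' + ((2 : ℕ) : Fin n) ∉ S := gap_mem hn hg' 2 (by omega) (by omega)
  have k3' : i' + ((3 : ℕ) : Fin n) ∉ S := gap_mem hn hg' 3 (by omega) (by omega)
  -- a set vertex that is not in the closed neighborhood of i+2 nor of i'+2 :
  have nbhd : ∀ s ∈ S, ∀ a : Fin n, a + ((1 : ℕ) : Fin n) ∉ S → a + ((2 : ℕ) : Fin n) ∉ S →
      a + ((3 : ℕ) : Fin n) ∉ S →
      ¬ (SimpleGraph.cycleGraph n).Adj (a + ((2 : ℕ) : Fin n)) s := by
    intro s hs a ha1 ha2 ha3 hadj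
    rw [SimpleGraph.cycleGraph_adj'] at hadj
    rcases hadj with h | h
    · -- (a+2) - s = 1, so a+2 = s+1, s = a+1
      have := sub_val_eq_one hn h
      have hs' : s = a + ((1 : ℕ) : Fin n) := by
        have h2 : ((2 : ℕ) : Fin n) = ((1 : ℕ) : Fin n) + ((1 : ℕ) : Fin n) := by
          push_cast; ring
        linear_combination -this + h2
      exact ha1 (hs' ▸ hs)
    · -- s - (a+2) = 1, so s = a+3
      have := sub_val_eq_one hn h
      have hs' : s = a + ((3 : ℕ) : Fin n) := by
        have h2 : ((3 : ℕ) : Fin n) = ((2 : ℕ) : Fin n) + ((1 : ℕ) : Fin n) := by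
          push_cast; ring
        linear_combination this - h2
      exact ha3 (hs' ▸ hs)
  have hii' : i = i' := by
    by_contra hii
    have huu' : i + ((2 : ℕ) : Fin n) ≠ i' + ((2 : ℕ) : Fin n) := fun h =>
      hii (add_right_cancel h)
    have hnadj : ¬ (wheel n).Adj (some (i + ((2 : ℕ) : Fin n))) (some (i' + ((2 : ℕ) : Fin n))) := by
      rw [wheel_adj_some, SimpleGraph.cycleGraph_adj']
      rintro (h | h)
      · -- (i+2)-(i'+2) = 1, i = i'+1
        have := sub_val_eq_one hn h
        have : i = i' + ((1 : ℕ) : Fin n) := by linear_combination this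
        exact k1' (this ▸ hg.1)
      · have := sub_val_eq_one hn h
        have : i' = i + ((1 : ℕ) : Fin n) := by linear_combination this
        exact k1 (this ▸ hg'.1)
    obtain ⟨x, hx, hd⟩ := hres _ _ (fun h => huu' (by simpa using h)) hnadj
    simp only [Finset.mem_image] at hx
    obtain ⟨s, hs, rfl⟩ := hx
    have d1 : (wheel n).dist (some (i + ((2 : ℕ) : Fin n))) (some s) = 2 :=
      wheel_dist_two (fun h => k2 (h ▸ hs)) (nbhd s hs i k1 k2 k3)
    have d2 : (wheel n).dist (some (i' + ((2 : ℕ) : Fin n))) (some s) = 2 :=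
      wheel_dist_two (fun h => k2' (h ▸ hs)) (nbhd s hs i' k1' k2' k3')
    exact hd (d1.trans d2.symm)
  subst hii'
  refine ⟨rfl, ?_⟩
  by_contra hjj
  have hvne : (j - i).val ≠ (j' - i).val := by
    intro h
    exact hjj (by
      have : j - i = j' - i := Fin.ext h
      linear_combination this)
  rcases lt_or_gt_of_ne hvne with h | h
  · exact hg'.2.2.2 j (by omega) h hg.2.1
  · exact hg.2.2.2 j' (by omega) h hg'.2.1
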